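/- Under the hypotheses of the previous compactness lemma, τ > 0 can be chosen so that in addition the map x ↦ ∇_x G(x,t) is injective (indeed a C^1 diffeomorphism onto its image) on the closed box of radius τ around x_0, simultaneously for all t in the compact set F_2. -/

import Mathlib

/-- The Hessian matrix in the `x`-variables of `(x, t) ↦ G x t` at `x`, for fixed `t`. -/
noncomputable def HessX {n m : ℕ} (G : (Fin n → ℝ) → (Fin m → ℝ) → ℝ)
    (t : Fin m → ℝ) (x : Fin n → ℝ) : Matrix (Fin n) (Fin n) ℝ :=
  Matrix.of fun i j =>
    fderiv ℝ (fun z => fderiv ℝ (fun w => G w t) z (Pi.single j (1 : ℝ))) x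
      (Pi.single i (1 : ℝ))

/-- The gradient in the `x`-variables of `(x, t) ↦ G x t` at `x`, for fixed `t`. -/
noncomputable def gradX {n m : ℕ} (G : (Fin n → ℝ) → (Fin m → ℝ) → ℝ)
    (t : Fin m → ℝ) (x : Fin n → ℝ) : Fin n → ℝ :=
  fun i => fderiv ℝ (fun w => G w t) x (Pi.single i (1 : ℝ))



noncomputable def matCLM {n : ℕ} (M : Matrix (Fin n) (Fin n) ℝ) :
    (Fin n → ℝ) →L[ℝ] (Fin n → ℝ) :=
  LinearMap.toContinuousLinearMap (Matrix.toLin' M)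

@[simp] lemma matCLM_apply {n : ℕ} (M : Matrix (Fin n) (Fin n) ℝ) (v : Fin n → ℝ) :
    matCLM M v = M.mulVec v := by
  simp [matCLM, Matrix.toLin'_apply]

lemma continuous_matCLM {n : ℕ} : Continuous (matCLM (n := n)) := by
  have : (matCLM (n := n)) = fun M =>
      (LinearMap.toContinuousLinearMap.toLinearMap.comp
        (Matrix.toLin' (R := ℝ) (m := Fin n) (n := Fin n)).toLinearMap) M := rfl
  rw [this]
  exact LinearMap.continuous_of_finiteDimensional _

section aux
variable {n m : ℕ} {G1 : Set (Fin n → ℝ)} {G2 : Set (Fin m → ℝ)}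
  {G : (Fin n → ℝ) → (Fin m → ℝ) → ℝ}

lemma phi_hasFDerivAt (hU : IsOpen (G1 ×ˢ G2))
    (hG : ContDiffOn ℝ 2 (fun p : (Fin n → ℝ) × (Fin m → ℝ) => G p.1 p.2) (G1 ×ˢ G2))
    {x : Fin n → ℝ} {t : Fin m → ℝ} (hp : (x, t) ∈ G1 ×ˢ G2) :
    HasFDerivAt (fun p : (Fin n → ℝ) × (Fin m → ℝ) => G p.1 p.2)
      (fderiv ℝ (fun p : (Fin n → ℝ) × (Fin m → ℝ) => G p.1 p.2) (x, t)) (x, t) :=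
  (((hG.contDiffAt (hU.mem_nhds hp)).differentiableAt (by norm_num))).hasFDerivAt

lemma slice_fderiv (hU : IsOpen (G1 ×ˢ G2))
    (hG : ContDiffOn ℝ 2 (fun p : (Fin n → ℝ) × (Fin m → ℝ) => G p.1 p.2) (G1 ×ˢ G2))
    {x : Fin n → ℝ} {t : Fin m → ℝ} (hp : (x, t) ∈ G1 ×ˢ G2) :
    fderiv ℝ (fun w => G w t) x =
      (fderiv ℝ (fun p : (Fin n → ℝ) × (Fin m → ℝ) => G p.1 p.2) (x, t)).comp
        (ContinuousLinearMap.inl ℝ (Fin n → ℝ) (Fin m → ℝ)) := by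
  have h1 : HasFDerivAt (fun w : Fin n → ℝ => (w, t))
      (ContinuousLinearMap.inl ℝ (Fin n → ℝ) (Fin m → ℝ)) x := hasFDerivAt_prodMk_left x t
  exact ((phi_hasFDerivAt hU hG hp).comp x h1).fderiv

lemma fderivPhi_contDiffOn (hU : IsOpen (G1 ×ˢ G2))
    (hG : ContDiffOn ℝ 2 (fun p : (Fin n → ℝ) × (Fin m → ℝ) => G p.1 p.2) (G1 ×ˢ G2)) :
    ContDiffOn ℝ 1 (fderiv ℝ (fun p : (Fin n → ℝ) × (Fin m → ℝ) => G p.1 p.2)) (G1 ×ˢ G2) :=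
  hG.fderiv_of_isOpen hU (by norm_num)

lemma psi_hasFDerivAt (hU : IsOpen (G1 ×ˢ G2))
    (hG : ContDiffOn ℝ 2 (fun p : (Fin n → ℝ) × (Fin m → ℝ) => G p.1 p.2) (G1 ×ˢ G2))
    {x : Fin n → ℝ} {t : Fin m → ℝ} (hp : (x, t) ∈ G1 ×ˢ G2) :
    HasFDerivAt (fun z => fderiv ℝ (fun p : (Fin n → ℝ) × (Fin m → ℝ) => G p.1 p.2) (z, t))
      ((fderiv ℝ (fderiv ℝ (fun p : (Fin n → ℝ) × (Fin m → ℝ) => G p.1 p.2)) (x, t)).comp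
        (ContinuousLinearMap.inl ℝ (Fin n → ℝ) (Fin m → ℝ))) x := by
  have h0 : HasFDerivAt (fderiv ℝ (fun p : (Fin n → ℝ) × (Fin m → ℝ) => G p.1 p.2))
      (fderiv ℝ (fderiv ℝ (fun p : (Fin n → ℝ) × (Fin m → ℝ) => G p.1 p.2)) (x, t)) (x, t) :=
    (((fderivPhi_contDiffOn hU hG).contDiffAt (hU.mem_nhds hp)).differentiableAt
      (by norm_num)).hasFDerivAt
  exact h0.comp x (hasFDerivAt_prodMk_left x t)

end aux

open Filter Topology Matrix

section aux2
variable {n m : ℕ} {G1 : Set (Fin n → ℝ)} {G2 : Set (Fin m → ℝ)}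
  {G : (Fin n → ℝ) → (Fin m → ℝ) → ℝ}

lemma entry_eventuallyEq (hG1 : IsOpen G1) (hG2 : IsOpen G2)
    (hG : ContDiffOn ℝ 2 (fun p : (Fin n → ℝ) × (Fin m → ℝ) => G p.1 p.2) (G1 ×ˢ G2))
    {x : Fin n → ℝ} {t : Fin m → ℝ} (hx : x ∈ G1) (ht : t ∈ G2) (j : Fin n) :
    (fun z => fderiv ℝ (fun w => G w t) z (Pi.single j (1 : ℝ))) =ᶠ[𝓝 x]
    (fun z => fderiv ℝ (fun p : (Fin n → ℝ) × (Fin m → ℝ) => G p.1 p.2) (z, t)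
      (Pi.single j (1 : ℝ), 0)) := by
  filter_upwards [hG1.mem_nhds hx] with z hz
  rw [slice_fderiv (hG1.prod hG2) hG ⟨hz, ht⟩]
  rfl

lemma hess_entry (hG1 : IsOpen G1) (hG2 : IsOpen G2)
    (hG : ContDiffOn ℝ 2 (fun p : (Fin n → ℝ) × (Fin m → ℝ) => G p.1 p.2) (G1 ×ˢ G2))
    {x : Fin n → ℝ} {t : Fin m → ℝ} (hx : x ∈ G1) (ht : t ∈ G2) (i j : Fin n) :
    HessX G t x i j =
      fderiv ℝ (fderiv ℝ (fun p : (Fin n → ℝ) × (Fin m → ℝ) => G p.1 p.2)) (x, t)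
        (Pi.single i (1 : ℝ), 0) (Pi.single j (1 : ℝ), 0) := by
  have hU := hG1.prod hG2
  have hE := entry_eventuallyEq hG1 hG2 hG hx ht j
  have h1 : HasFDerivAt
      (fun z => fderiv ℝ (fun p : (Fin n → ℝ) × (Fin m → ℝ) => G p.1 p.2) (z, t)
        (Pi.single j (1 : ℝ), 0))
      (((fderiv ℝ (fderiv ℝ (fun p : (Fin n → ℝ) × (Fin m → ℝ) => G p.1 p.2)) (x, t)).comp
        (ContinuousLinearMap.inl ℝ (Fin n → ℝ) (Fin m → ℝ))).flip (Pi.single j (1 : ℝ), 0)) x := by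
    have := (psi_hasFDerivAt hU hG ⟨hx, ht⟩).clm_apply
      (hasFDerivAt_const (Pi.single j (1 : ℝ), (0 : Fin m → ℝ)) x)
    simpa using this
  show fderiv ℝ (fun z => fderiv ℝ (fun w => G w t) z (Pi.single j (1 : ℝ))) x
      (Pi.single i (1 : ℝ)) = _
  rw [hE.fderiv_eq, h1.fderiv]
  simp

lemma gradX_hasFDerivAt (hG1 : IsOpen G1) (hG2 : IsOpen G2)
    (hG : ContDiffOn ℝ 2 (fun p : (Fin n → ℝ) × (Fin m → ℝ) => G p.1 p.2) (G1 ×ˢ G2))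
    {x : Fin n → ℝ} {t : Fin m → ℝ} (hx : x ∈ G1) (ht : t ∈ G2) :
    HasFDerivAt (gradX G t) (matCLM (HessX G t x)ᵀ) x := by
  have hU := hG1.prod hG2
  set Bxt := fderiv ℝ (fderiv ℝ (fun p : (Fin n → ℝ) × (Fin m → ℝ) => G p.1 p.2)) (x, t) with hBxt
  -- the candidate derivative, componentwise
  set D : (Fin n → ℝ) →L[ℝ] (Fin n → ℝ) := ContinuousLinearMap.pi (fun i =>
    ((Bxt.comp (ContinuousLinearMap.inl ℝ (Fin n → ℝ) (Fin m → ℝ))).flip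
      (Pi.single i (1 : ℝ), 0))) with hD
  have h1 : HasFDerivAt
      (fun z i => fderiv ℝ (fun p : (Fin n → ℝ) × (Fin m → ℝ) => G p.1 p.2) (z, t)
        (Pi.single i (1 : ℝ), 0)) D x := by
    rw [hD]
    rw [hasFDerivAt_pi]
    intro i
    have := (psi_hasFDerivAt hU hG ⟨hx, ht⟩).clm_apply
      (hasFDerivAt_const (Pi.single i (1 : ℝ), (0 : Fin m → ℝ)) x)
    simpa using this
  have hE : gradX G t =ᶠ[𝓝 x]
      (fun z i => fderiv ℝ (fun p : (Fin n → ℝ) × (Fin m → ℝ) => G p.1 p.2) (z, t)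
        (Pi.single i (1 : ℝ), 0)) := by
    filter_upwards [hG1.mem_nhds hx] with z hz
    funext i
    show fderiv ℝ (fun w => G w t) z (Pi.single i (1:ℝ)) = _
    rw [slice_fderiv hU hG ⟨hz, ht⟩]
    rfl
  have h2 : HasFDerivAt (gradX G t) D x := h1.congr_of_eventuallyEq hE
  have hDeq : D = matCLM (HessX G t x)ᵀ := by
    apply ContinuousLinearMap.coe_injective
    apply (Pi.basisFun ℝ (Fin n)).ext
    intro j
    funext i
    simp only [Pi.basisFun_apply]
    show D (Pi.single j 1) i = matCLM (HessX G t x)ᵀ (Pi.single j 1) i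
    rw [matCLM_apply]
    have : (HessX G t x)ᵀ.mulVec (Pi.single j 1) i = (HessX G t x) j i := by
      simp [Matrix.mulVec_single]
    rw [this, hess_entry hG1 hG2 hG hx ht j i]
    simp [hD, hBxt]
  rwa [hDeq] at h2

end aux2
section aux3
variable {n m : ℕ} {G1 : Set (Fin n → ℝ)} {G2 : Set (Fin m → ℝ)}
  {G : (Fin n → ℝ) → (Fin m → ℝ) → ℝ}

lemma continuousOn_matrix {α : Type*} [TopologicalSpace α] {s : Set α}
    {f : α → Matrix (Fin n) (Fin n) ℝ}
    (h : ∀ i j, ContinuousOn (fun a => f a i j) s) : ContinuousOn f s := fun x hx =>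
  continuousWithinAt_pi.2 fun i => continuousWithinAt_pi.2 fun j => h i j x hx

lemma hess_continuousOn (hG1 : IsOpen G1) (hG2 : IsOpen G2)
    (hG : ContDiffOn ℝ 2 (fun p : (Fin n → ℝ) × (Fin m → ℝ) => G p.1 p.2) (G1 ×ˢ G2)) :
    ContinuousOn (fun p : (Fin n → ℝ) × (Fin m → ℝ) => HessX G p.2 p.1) (G1 ×ˢ G2) := by
  have hU := hG1.prod hG2
  have h2c : ContinuousOn
      (fderiv ℝ (fderiv ℝ (fun p : (Fin n → ℝ) × (Fin m → ℝ) => G p.1 p.2))) (G1 ×ˢ G2) :=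
    (fderivPhi_contDiffOn hU hG).continuousOn_fderiv_of_isOpen hU (le_refl 1)
  apply continuousOn_matrix
  intro i j
  have : ContinuousOn (fun p : (Fin n → ℝ) × (Fin m → ℝ) =>
      fderiv ℝ (fderiv ℝ (fun p : (Fin n → ℝ) × (Fin m → ℝ) => G p.1 p.2)) p
        (Pi.single i (1 : ℝ), 0) (Pi.single j (1 : ℝ), 0)) (G1 ×ˢ G2) :=
    (h2c.clm_apply continuousOn_const).clm_apply continuousOn_const
  refine this.congr fun p hp => ?_
  exact hess_entry hG1 hG2 hG hp.1 hp.2 i j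

end aux3
section aux4
variable {n m : ℕ} {G1 : Set (Fin n → ℝ)} {G2 : Set (Fin m → ℝ)}
  {G : (Fin n → ℝ) → (Fin m → ℝ) → ℝ}

lemma invnorm_continuousOn (hG1 : IsOpen G1) (hG2 : IsOpen G2)
    (hG : ContDiffOn ℝ 2 (fun p : (Fin n → ℝ) × (Fin m → ℝ) => G p.1 p.2) (G1 ×ˢ G2))
    {x0 : Fin n → ℝ} (hx0 : x0 ∈ G1)
    (hdet : ∀ t ∈ G2, (HessX G t x0).det ≠ 0) :
    ContinuousOn (fun t => ‖matCLM (((HessX G t x0)ᵀ)⁻¹)‖) G2 := by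
  have hH : ContinuousOn (fun t => HessX G t x0) G2 := by
    have := (hess_continuousOn hG1 hG2 hG).comp
      ((continuous_const.prodMk continuous_id).continuousOn (s := G2))
      (fun t ht => Set.mk_mem_prod hx0 ht)
    exact this
  have hHT : ContinuousOn (fun t => (HessX G t x0)ᵀ) G2 :=
    continuous_id.matrix_transpose.comp_continuousOn hH
  have hInv : ContinuousOn (fun t => ((HessX G t x0)ᵀ)⁻¹) G2 := by
    intro t ht
    have hca : ContinuousAt Ring.inverse ((HessX G t x0)ᵀ).det := by
      rw [Ring.inverse_eq_inv']
      apply continuousAt_inv₀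
      rw [Matrix.det_transpose]
      exact hdet t ht
    have hca2 : ContinuousAt Inv.inv ((HessX G t x0)ᵀ) := continuousAt_matrix_inv _ hca
    have := ContinuousAt.comp_continuousWithinAt (f := fun t => (HessX G t x0)ᵀ) (x := t) hca2 (hHT t ht)
    exact this
  exact continuous_norm.comp_continuousOn (continuous_matCLM.comp_continuousOn hInv)

end aux4
theorem stmt_8 {n m : ℕ} (G1 : Set (Fin n → ℝ)) (G2 : Set (Fin m → ℝ))
    (hG1 : IsOpen G1) (hG2 : IsOpen G2)
    (hG1b : Bornology.IsBounded G1) (hG2b : Bornology.IsBounded G2)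
    (hG1c : IsConnected G1) (hG2c : IsConnected G2)
    (G : (Fin n → ℝ) → (Fin m → ℝ) → ℝ)
    (hG : ContDiffOn ℝ 2 (fun p : (Fin n → ℝ) × (Fin m → ℝ) => G p.1 p.2) (G1 ×ˢ G2))
    (x0 : Fin n → ℝ) (hx0 : x0 ∈ G1)
    (hdet : ∀ t ∈ G2, (HessX G t x0).det ≠ 0)
    (F2 : Set (Fin m → ℝ)) (hF2 : IsCompact F2) (hF2sub : F2 ⊆ G2) :
    ∃ τ > (0 : ℝ), Metric.closedBall x0 τ ⊆ G1 ∧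
      (∃ c1 > (0 : ℝ), ∃ c2 > (0 : ℝ),
        ∀ x ∈ Metric.closedBall x0 τ, ∀ t ∈ F2,
          c1 ≤ |(HessX G t x).det| ∧ |(HessX G t x).det| ≤ c2) ∧
      ∀ t ∈ F2, Set.InjOn (gradX G t) (Metric.closedBall x0 τ) := by
  obtain ⟨ε₁, hε₁, hball⟩ := Metric.isOpen_iff.1 hG1 x0 hx0
  set r0 := ε₁ / 2 with hr0def
  have hr0 : 0 < r0 := by positivity
  have hball0 : Metric.closedBall x0 r0 ⊆ G1 :=
    (Metric.closedBall_subset_ball (by simp [hr0def]; linarith)).trans hball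
  rcases Set.eq_empty_or_nonempty F2 with hF2e | hF2ne
  · refine ⟨r0, hr0, hball0, ⟨1, one_pos, 1, one_pos, ?_⟩, ?_⟩ <;> simp [hF2e]
  have hU := hG1.prod hG2
  set K := Metric.closedBall x0 r0 ×ˢ F2 with hKdef
  have hK : IsCompact K := (isCompact_closedBall x0 r0).prod hF2
  have hKsub : K ⊆ G1 ×ˢ G2 := Set.prod_mono hball0 hF2sub
  -- continuity of |det Hess|
  have hdetc : ContinuousOn (fun p : (Fin n → ℝ) × (Fin m → ℝ) => |(HessX G p.2 p.1).det|)
      (G1 ×ˢ G2) :=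
    (continuous_abs.comp continuous_id.matrix_det).comp_continuousOn
      (hess_continuousOn hG1 hG2 hG)
  have hdetK := hdetc.mono hKsub
  -- minimum of |det| at x0 over F2
  have hψc : ContinuousOn (fun t => |(HessX G t x0).det|) F2 := by
    have := hdetc.comp ((continuous_const.prodMk continuous_id).continuousOn (s := F2))
      (fun t ht => Set.mk_mem_prod hx0 (hF2sub ht))
    exact this
  obtain ⟨tm, htm, hmin'⟩ := hF2.exists_isMinOn hF2ne hψc
  have hmin := isMinOn_iff.1 hmin'
  set c := |(HessX G tm x0).det| with hcdef
  have hcpos : 0 < c := abs_pos.2 (hdet tm (hF2sub htm))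
  obtain ⟨δ1, hδ1, hU1⟩ := Metric.uniformContinuousOn_iff.1
    (hK.uniformContinuousOn_of_continuous hdetK) (c / 2) (by positivity)
  -- the CLM-valued Hessian map
  have hΨc : ContinuousOn (fun p : (Fin n → ℝ) × (Fin m → ℝ) => matCLM ((HessX G p.2 p.1)ᵀ))
      (G1 ×ˢ G2) :=
    (continuous_matCLM.comp continuous_id.matrix_transpose).comp_continuousOn
      (hess_continuousOn hG1 hG2 hG)
  have hΨK := hΨc.mono hKsub
  -- bound on norms of inverses at x0
  have hνc := (invnorm_continuousOn hG1 hG2 hG hx0 hdet).mono hF2sub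
  obtain ⟨tM, htM, hmax'⟩ := hF2.exists_isMaxOn hF2ne hνc
  have hmax := isMaxOn_iff.1 hmax'
  set Nmax := max (‖matCLM (((HessX G tM x0)ᵀ)⁻¹)‖) 1 with hNdef
  have hN1 : (1 : ℝ) ≤ Nmax := le_max_right _ _
  have hNpos : (0 : ℝ) < Nmax := lt_of_lt_of_le one_pos hN1
  set ε := (2 * Nmax)⁻¹ with hεdef
  have hεpos : 0 < ε := by positivity
  obtain ⟨δ2, hδ2, hU2⟩ := Metric.uniformContinuousOn_iff.1
    (hK.uniformContinuousOn_of_continuous hΨK) ε hεpos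
  set τ := min r0 (min δ1 δ2 / 2) with hτdef
  have hτpos : 0 < τ := lt_min hr0 (by positivity)
  have hτr0 : τ ≤ r0 := min_le_left _ _
  have hsub1 : Metric.closedBall x0 τ ⊆ Metric.closedBall x0 r0 :=
    Metric.closedBall_subset_closedBall hτr0
  have hsubG1 : Metric.closedBall x0 τ ⊆ G1 := hsub1.trans hball0
  have hmemK : ∀ x ∈ Metric.closedBall x0 τ, ∀ t ∈ F2, ((x, t) : _ × _) ∈ K :=
    fun x hx t ht => Set.mk_mem_prod (hsub1 hx) ht
  have hx0K : ∀ t ∈ F2, ((x0, t) : _ × _) ∈ K :=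
    fun t ht => Set.mk_mem_prod (Metric.mem_closedBall_self hr0.le) ht
  have hdistlt : ∀ x ∈ Metric.closedBall x0 τ, ∀ t : Fin m → ℝ,
      dist ((x, t) : (Fin n → ℝ) × (Fin m → ℝ)) ((x0, t)) < min δ1 δ2 := by
    intro x hx t
    rw [Prod.dist_eq]
    simp only [dist_self]
    rw [max_eq_left dist_nonneg]
    have h1 : dist x x0 ≤ τ := Metric.mem_closedBall.1 hx
    have h2 : τ ≤ min δ1 δ2 / 2 := min_le_right _ _
    have h3 : min δ1 δ2 / 2 < min δ1 δ2 := half_lt_self (lt_min hδ1 hδ2)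
    linarith
  -- upper bound
  obtain ⟨pM, hpM, hmaxK'⟩ := hK.exists_isMaxOn ⟨(x0, tm), hx0K tm htm⟩ hdetK
  have hmaxK := isMaxOn_iff.1 hmaxK'
  refine ⟨τ, hτpos, hsubG1, ⟨c / 2, by positivity,
    max (|(HessX G pM.2 pM.1).det|) 1, lt_of_lt_of_le one_pos (le_max_right _ _), ?_⟩, ?_⟩
  · intro x hx t ht
    have hxt := hmemK x hx t ht
    have hx0t := hx0K t ht
    have hdd := hU1 _ hxt _ hx0t (lt_of_lt_of_le (hdistlt x hx t) (min_le_left _ _))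
    rw [Real.dist_eq] at hdd
    have hlow : c ≤ |(HessX G t x0).det| := hmin t ht
    constructor
    · have := abs_sub_abs_le_abs_sub (|(HessX G t x0).det|) (|(HessX G t x).det|)
      have h5 : |(HessX G t x0).det| - |(HessX G t x).det| < c / 2 := by
        have := neg_lt_of_abs_lt hdd
        linarith [abs_nonneg ((HessX G t x).det)]
      linarith
    · exact le_max_of_le_left (hmaxK _ hxt)
  -- injectivity
  intro t ht
  have ht2 := hF2sub ht
  set P := (HessX G t x0)ᵀ with hPdef
  have hPdet : P.det ≠ 0 := by rw [hPdef, Matrix.det_transpose]; exact hdet t ht2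
  letI instInv : Invertible P := P.invertibleOfIsUnitDet (isUnit_iff_ne_zero.2 hPdet)
  set A := (P.toLinearEquiv' instInv).toContinuousLinearEquiv with hAdef
  have hAcoe : (A : (Fin n → ℝ) →L[ℝ] (Fin n → ℝ)) = matCLM P := by
    ext v
    rfl
  have hAsymm : (A.symm : (Fin n → ℝ) →L[ℝ] (Fin n → ℝ)) = matCLM P⁻¹ := by
    ext v
    have h8 := LinearMap.congr_fun
      ((Matrix.toLinearEquiv'_symm_apply P instInv).trans (by rw [invOf_eq_nonsing_inv])) v
    exact congrFun h8 _
  have hAnorm : ‖(A.symm : (Fin n → ℝ) →L[ℝ] (Fin n → ℝ))‖ ≤ Nmax := by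
    rw [hAsymm, hPdef]
    exact le_trans (hmax t ht) (le_max_left _ _)
  have happ : ApproximatesLinearOn (gradX G t)
      (A : (Fin n → ℝ) →L[ℝ] (Fin n → ℝ)) (Metric.closedBall x0 τ) ε.toNNReal := by
    intro x hx y hy
    have hder : ∀ z ∈ Metric.closedBall x0 τ,
        HasFDerivWithinAt (fun w => gradX G t w - matCLM P w)
          (matCLM ((HessX G t z)ᵀ) - matCLM P) (Metric.closedBall x0 τ) z := fun z hz =>
      ((gradX_hasFDerivAt hG1 hG2 hG (hsubG1 hz) ht2).sub
        ((matCLM P).hasFDerivAt)).hasFDerivWithinAt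
    have hbd : ∀ z ∈ Metric.closedBall x0 τ, ‖matCLM ((HessX G t z)ᵀ) - matCLM P‖ ≤ ε := by
      intro z hz
      have hdd := hU2 _ (hmemK z hz t ht) _ (hx0K t ht)
        (lt_of_lt_of_le (hdistlt z hz t) (min_le_right _ _))
      rw [dist_eq_norm] at hdd
      exact hdd.le
    have hmv := Convex.norm_image_sub_le_of_norm_hasFDerivWithin_le hder hbd
      (convex_closedBall x0 τ) hy hx
    calc ‖gradX G t x - gradX G t y - (A : (Fin n → ℝ) →L[ℝ] (Fin n → ℝ)) (x - y)‖
        = ‖(gradX G t x - matCLM P x) - (gradX G t y - matCLM P y)‖ := by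
          rw [hAcoe, map_sub]; congr 1; abel
      _ ≤ ε * ‖x - y‖ := hmv
      _ = (ε.toNNReal : ℝ) * ‖x - y‖ := by rw [Real.coe_toNNReal _ hεpos.le]
  refine happ.injOn ?_
  rcases subsingleton_or_nontrivial (Fin n → ℝ) with hss | hnt
  · exact Or.inl hss
  · right
    have hpos : 0 < ‖(A.symm : (Fin n → ℝ) →L[ℝ] (Fin n → ℝ))‖ := A.norm_symm_pos
    rw [← NNReal.coe_lt_coe]
    push_cast
    rw [Real.coe_toNNReal _ hεpos.le]
    have h6 : Nmax⁻¹ ≤ ‖(A.symm : (Fin n → ℝ) →L[ℝ] (Fin n → ℝ))‖⁻¹ :=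
      inv_anti₀ hpos hAnorm
    have h7 : ε < Nmax⁻¹ := by
      rw [hεdef]
      apply inv_strictAnti₀ hNpos
      linarith
    calc (ε : ℝ) < Nmax⁻¹ := h7
      _ ≤ _ := h6
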